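/- (Theorem 2 of StructComp, made precise via second-order Taylor surrogate.) Let V be a finite index set of nodes with scalar representations h : V → ℝ, and for each i let pos(i) and neg(i) be finite sets of positive and negative partners. Define the no-augmentation InfoNCE loss L = Σ_i Σ_{j∈pos(i)} h_i·h_j + Σ_i Σ_{j∈neg(i)} log(e^{h_i·h_i} + e^{h_i·h_j}). Let (h̃_i)_{i∈V} be square-integrable real random variables with E[h̃_i] = h_i for every i. Define the augmented surrogate loss L̃ = Σ_i Σ_{j∈pos(i)} h̃_i·h_j + Σ_i Σ_{j∈neg(i)} T_{ij}(h̃_i), where T_{ij} is the second-order Taylor polynomial of x ↦ log(e^{x·h_i} + e^{x·h_j}) around x = h_i. Then E[L̃] = L + Σ_i Σ_{j∈neg(i)} φ(h_i, h_j)·Var(h̃_i), where φ(h_i, h_j) = [(e^{h_i²}h_i² + e^{h_i h_j}h_j²)(e^{h_i²} + e^{h_i h_j}) − (e^{h_i²}h_i + e^{h_i h_j}h_j)²] / (2(e^{h_i²} + e^{h_i h_j})²); i.e., the augmentation introduces an additional variance-based regularization term into the InfoNCE loss. -/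

import Mathlib

open MeasureTheory ProbabilityTheory

/-- The coefficient `φ(h_i, h_j)` appearing in the regularization term of
Theorem 2 of StructComp. -/
noncomputable def phiCoeff (hi hj : ℝ) : ℝ :=
  ((Real.exp (hi ^ 2) * hi ^ 2 + Real.exp (hi * hj) * hj ^ 2) *
        (Real.exp (hi ^ 2) + Real.exp (hi * hj)) -
      (Real.exp (hi ^ 2) * hi + Real.exp (hi * hj) * hj) ^ 2) /
    (2 * (Real.exp (hi ^ 2) + Real.exp (hi * hj)) ^ 2)

private lemma expD1 (a x : ℝ) :
    HasDerivAt (fun x : ℝ => Real.exp (x * a)) (Real.exp (x * a) * a) x := by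
  simpa using (((hasDerivAt_id x).mul_const a).exp)

private lemma derivLog1 (a b : ℝ) :
    deriv (fun x => Real.log (Real.exp (x * a) + Real.exp (x * b)))
      = fun x => (Real.exp (x*a)*a + Real.exp (x*b)*b) / (Real.exp (x*a) + Real.exp (x*b)) :=
  funext fun x => (((expD1 a x).add (expD1 b x)).log (add_pos (Real.exp_pos _) (Real.exp_pos _)).ne').deriv

private lemma derivLog2 (a b x : ℝ) :
    deriv (deriv (fun x => Real.log (Real.exp (x * a) + Real.exp (x * b)))) x
      = ((Real.exp (x*a)*a*a + Real.exp (x*b)*b*b) * (Real.exp (x*a) + Real.exp (x*b))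
          - (Real.exp (x*a)*a + Real.exp (x*b)*b) * (Real.exp (x*a)*a + Real.exp (x*b)*b))
        / (Real.exp (x*a) + Real.exp (x*b)) ^ 2 := by
  rw [derivLog1]
  exact ((((expD1 a x).mul_const a).add ((expD1 b x).mul_const b)).div
    ((expD1 a x).add (expD1 b x)) (add_pos (Real.exp_pos _) (Real.exp_pos _)).ne').deriv

private lemma halfD2 (a b : ℝ) :
    (1/2 : ℝ) * deriv (deriv (fun x => Real.log (Real.exp (x * a) + Real.exp (x * b)))) a
      = phiCoeff a b := by
  rw [derivLog2 a b a, show a * a = a ^ 2 from (sq a).symm]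
  have hS : (0:ℝ) < Real.exp (a^2) + Real.exp (a*b) := by positivity
  unfold phiCoeff
  field_simp

private lemma taylor_int {Ω : Type*} [MeasurableSpace Ω] (μ : Measure Ω)
    [IsProbabilityMeasure μ] (X : Ω → ℝ) (hX : MemLp X 2 μ) (m A B C : ℝ)
    (hm : ∫ ω, X ω ∂μ = m) :
    ∫ ω, (A + B * (X ω - m) + C * (X ω - m) ^ 2) ∂μ = A + C * variance X μ := by
  have hi : Integrable X μ := hX.integrable one_le_two
  have h2 : Integrable (fun ω => (X ω - m) ^ 2) μ := by
    have := (hX.sub (memLp_const m)).integrable_sq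
    simpa using this
  have h1 : Integrable (fun ω => B * (X ω - m)) μ :=
    (hi.sub (integrable_const m)).const_mul B
  have hvar : variance X μ = ∫ ω, (X ω - m) ^ 2 ∂μ := by
    rw [variance_eq_integral hX.aestronglyMeasurable.aemeasurable]
    simp only [hm]
  have h01 : Integrable (fun ω => A + B * (X ω - m)) μ := (integrable_const A).add h1
  have h2' : Integrable (fun ω => C * (X ω - m) ^ 2) μ := h2.const_mul C
  rw [integral_add h01 h2', integral_add (integrable_const A) h1, integral_const,
    integral_const_mul, integral_const_mul, integral_sub hi (integrable_const m),
    integral_const, hm, hvar]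
  simp

/-- **Theorem 2 of StructComp (via second-order Taylor surrogate).**
For the no-augmentation InfoNCE loss
`L = Σ_i Σ_{j∈pos(i)} h_i·h_j + Σ_i Σ_{j∈neg(i)} log(e^{h_i·h_i} + e^{h_i·h_j})`
and mean-preserving square-integrable random perturbations `h̃_i` of the anchors,
the expectation of the augmented surrogate loss (with each negative-pair term replaced
by its second-order Taylor polynomial around `h_i` evaluated at `h̃_i`) equals
`L + Σ_i Σ_{j∈neg(i)} φ(h_i, h_j)·Var(h̃_i)`. -/
theorem structcomp_infonce_regularization {V : Type*} [Fintype V]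
    {Ω : Type*} [MeasurableSpace Ω] (μ : Measure Ω) [IsProbabilityMeasure μ]
    (h : V → ℝ) (pos neg : V → Finset V)
    (htil : V → Ω → ℝ)
    (hmem : ∀ i, MemLp (htil i) 2 μ)
    (hmean : ∀ i, ∫ ω, htil i ω ∂μ = h i)
    (f : V → V → ℝ → ℝ)
    (hf : ∀ i j, f i j = fun x : ℝ => Real.log (Real.exp (x * h i) + Real.exp (x * h j)))
    (T : V → V → ℝ → ℝ)
    (hT : ∀ i j x, T i j x = f i j (h i) + deriv (f i j) (h i) * (x - h i)
        + (1 / 2) * deriv (deriv (f i j)) (h i) * (x - h i) ^ 2)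
    (L : ℝ)
    (hL : L = (∑ i, ∑ j ∈ pos i, h i * h j)
        + ∑ i, ∑ j ∈ neg i, Real.log (Real.exp (h i * h i) + Real.exp (h i * h j))) :
    ∫ ω, ((∑ i, ∑ j ∈ pos i, htil i ω * h j)
        + ∑ i, ∑ j ∈ neg i, T i j (htil i ω)) ∂μ =
      L + ∑ i, ∑ j ∈ neg i, phiCoeff (h i) (h j) * variance (htil i) μ := by
  have hint : ∀ i, Integrable (htil i) μ := fun i => (hmem i).integrable one_le_two
  have hsq : ∀ i, Integrable (fun ω => (htil i ω - h i) ^ 2) μ := fun i => by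
    have := ((hmem i).sub (memLp_const (h i))).integrable_sq
    simpa using this
  have hTint : ∀ i j, Integrable (fun ω => T i j (htil i ω)) μ := fun i j => by
    simp only [hT]
    exact ((integrable_const _).add
      (((hint i).sub (integrable_const _)).const_mul _)).add ((hsq i).const_mul _)
  have hTkey : ∀ i j, ∫ ω, T i j (htil i ω) ∂μ
      = Real.log (Real.exp (h i * h i) + Real.exp (h i * h j))
        + phiCoeff (h i) (h j) * variance (htil i) μ := fun i j => by
    simp only [hT, hf]
    rw [taylor_int μ (htil i) (hmem i) (h i) _ _ _ (hmean i), halfD2]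
  have hP : ∫ ω, (∑ i, ∑ j ∈ pos i, htil i ω * h j) ∂μ
      = ∑ i, ∑ j ∈ pos i, h i * h j := by
    rw [integral_finset_sum _ fun i _ =>
      integrable_finset_sum _ fun j _ => (hint i).mul_const _]
    refine Finset.sum_congr rfl fun i _ => ?_
    rw [integral_finset_sum _ fun j _ => (hint i).mul_const _]
    exact Finset.sum_congr rfl fun j _ => by rw [integral_mul_const, hmean]
  rw [integral_add
      (integrable_finset_sum _ fun i _ =>
        integrable_finset_sum _ fun j _ => (hint i).mul_const _)
      (integrable_finset_sum _ fun i _ =>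
        integrable_finset_sum _ fun j _ => hTint i j),
    hP, integral_finset_sum _ fun i _ =>
      integrable_finset_sum _ fun j _ => hTint i j]
  have : ∀ i, ∫ ω, (∑ j ∈ neg i, T i j (htil i ω)) ∂μ
      = ∑ j ∈ neg i, (Real.log (Real.exp (h i * h i) + Real.exp (h i * h j))
          + phiCoeff (h i) (h j) * variance (htil i) μ) := fun i => by
    rw [integral_finset_sum _ fun j _ => hTint i j]
    exact Finset.sum_congr rfl fun j _ => hTkey i j
  simp only [this, Finset.sum_add_distrib, hL]
  ring
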